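/- Let (R, 𝔪) be a graded local ring and I a proper graded ideal of R. If 𝔪² ⊆ I, then I is a graded 1-absorbing prime ideal of R. -/

import Mathlib

/-- `M` is a graded maximal ideal: a proper graded ideal which is maximal among
proper graded ideals. -/
def IsGrMaximal {ι R : Type*} [AddGroup ι] [DecidableEq ι] [CommRing R]
    (𝒜 : ι → AddSubgroup R) [GradedRing 𝒜] (M : HomogeneousIdeal 𝒜) : Prop :=
  M.toIdeal ≠ ⊤ ∧ ∀ J : HomogeneousIdeal 𝒜, J.toIdeal ≠ ⊤ → M.toIdeal ≤ J.toIdeal → J = M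

/-- `(R, 𝔪)` is a graded local ring: `𝔪` is the unique graded maximal ideal of `R`. -/
def IsGrLocal {ι R : Type*} [AddGroup ι] [DecidableEq ι] [CommRing R]
    (𝒜 : ι → AddSubgroup R) [GradedRing 𝒜] (m : HomogeneousIdeal 𝒜) : Prop :=
  IsGrMaximal 𝒜 m ∧ ∀ N : HomogeneousIdeal 𝒜, IsGrMaximal 𝒜 N → N = m

/-- Every homogeneous nonunit lies in the unique graded maximal ideal of a graded
local ring. -/
lemma nonunit_mem_of_isGrLocal {ι R : Type*} [AddGroup ι] [DecidableEq ι] [CommRing R]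
    (𝒜 : ι → AddSubgroup R) [GradedRing 𝒜]
    (m : HomogeneousIdeal 𝒜) (hloc : IsGrLocal 𝒜 m)
    {a : R} (ha : SetLike.IsHomogeneousElem 𝒜 a) (hna : ¬IsUnit a) : a ∈ m.toIdeal := by
  -- the homogeneous span of {a}
  have tle : ∀ J K : HomogeneousIdeal 𝒜, J ≤ K ↔ J.toIdeal ≤ K.toIdeal :=
    fun J K => Iff.rfl
  set J0 : HomogeneousIdeal 𝒜 :=
    ⟨Ideal.span {a}, Ideal.homogeneous_span 𝒜 {a} (by rintro x rfl; exact ha)⟩ with hJ0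
  have haJ0 : a ∈ J0.toIdeal := Ideal.subset_span rfl
  have hJ0ne : J0.toIdeal ≠ ⊤ := by
    intro h
    exact hna (Ideal.span_singleton_eq_top.mp h)
  -- Zorn's lemma on proper homogeneous ideals containing a
  obtain ⟨M, hJ0M, ⟨haM, hMne⟩, hMmax⟩ :=
    zorn_le_nonempty₀ {J : HomogeneousIdeal 𝒜 | a ∈ J.toIdeal ∧ J.toIdeal ≠ ⊤}
      (fun c hc hchain J hJ => by
        refine ⟨sSup c, ⟨?_, ?_⟩, fun K hK => le_sSup hK⟩
        · exact (tle _ _).mp (le_sSup hJ) (hc hJ).1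
        · intro htop
          have h1 : (1 : R) ∈ (sSup c).toIdeal := htop ▸ Submodule.mem_top
          rw [HomogeneousIdeal.toIdeal_sSup] at h1
          have h1' : (1 : R) ∈ sSup (HomogeneousIdeal.toIdeal '' c) := by
            rwa [sSup_image]
          obtain ⟨K, hKc, hK1⟩ := (Submodule.mem_sSup_of_directed
            (show (HomogeneousIdeal.toIdeal '' c).Nonempty from ⟨J.toIdeal, ⟨J, hJ, rfl⟩⟩)
            (by
              rintro _ ⟨p, hpc, rfl⟩ _ ⟨q, hqc, rfl⟩
              rcases hchain.total hpc hqc with h | h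
              · exact ⟨q.toIdeal, ⟨q, hqc, rfl⟩,
                  (tle _ _).mp h, le_rfl⟩
              · exact ⟨p.toIdeal, ⟨p, hpc, rfl⟩, le_rfl,
                  (tle _ _).mp h⟩)).mp h1'
          obtain ⟨L, hLc, rfl⟩ := hKc
          exact (hc hLc).2 (Ideal.eq_top_of_unit_mem _ 1 1 hK1 (mul_one 1)))
      J0 ⟨haJ0, hJ0ne⟩
  have hMgr : IsGrMaximal 𝒜 M := by
    refine ⟨hMne, fun J hJne hMJ => ?_⟩
    have : J ∈ {J : HomogeneousIdeal 𝒜 | a ∈ J.toIdeal ∧ J.toIdeal ≠ ⊤} :=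
      ⟨hMJ haM, hJne⟩
    exact le_antisymm (hMmax this ((tle _ _).mpr hMJ))
      ((tle _ _).mpr hMJ)
  have : M = m := hloc.2 M hMgr
  exact this ▸ haM

/-- Let `(R, 𝔪)` be a graded local ring and `I` a proper graded ideal of `R`.
If `𝔪² ⊆ I`, then `I` is a graded 1-absorbing prime ideal of `R`. -/
theorem stmt3 {ι R : Type*} [AddGroup ι] [DecidableEq ι] [CommRing R] [Nontrivial R]
    (𝒜 : ι → AddSubgroup R) [GradedRing 𝒜]
    (m : HomogeneousIdeal 𝒜) (hloc : IsGrLocal 𝒜 m)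
    (I : HomogeneousIdeal 𝒜) (hproper : I.toIdeal ≠ ⊤)
    (hm2 : m.toIdeal ^ 2 ≤ I.toIdeal) :
    ∀ a b c : R, SetLike.IsHomogeneousElem 𝒜 a → SetLike.IsHomogeneousElem 𝒜 b →
      SetLike.IsHomogeneousElem 𝒜 c → ¬IsUnit a → ¬IsUnit b → ¬IsUnit c →
      a * b * c ∈ I.toIdeal → a * b ∈ I.toIdeal ∨ c ∈ I.toIdeal := by
  intro a b c ha hb _ hna hnb _ _
  left
  have hma := nonunit_mem_of_isGrLocal 𝒜 m hloc ha hna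
  have hmb := nonunit_mem_of_isGrLocal 𝒜 m hloc hb hnb
  exact hm2 (by rw [sq]; exact Ideal.mul_mem_mul hma hmb)
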